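/- In the sufficient-covariate setup, assume ℙ(E = e, S = s) > 0 for every s ∈ 𝒮 and e ∈ {0,1}, and ℙ(R = 1 ∣ E = 1) > 0. Then the probability of causation PC = ℙ(R(S,0) = 0 ∣ E = 1, R(S,1) = 1) satisfies the upper bound PC ≤ 1 − Γ / ℙ(R = 1 ∣ E = 1), where Γ = Σ_{s∈𝒮} ℙ(S=s ∣ E=1) · max(0, ℙ(R=1 ∣ E=1, S=s) − ℙ(R=0 ∣ E=0, S=s)). -/

import Mathlib

open MeasureTheory ProbabilityTheory

/-- **Upper bound on the probability of causation in the sufficient-covariate setup.**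
In the sufficient-covariate setup (covariate `S` in a finite type `𝒮`, potential
exposures `Epot s`, potential responses `Rpot s e`, the three blocks mutually
independent, observed `E = Epot (S ·) ·` and `R = Rpot (S ·) (E ·) ·`), assume
`ℙ(E = e, S = s) > 0` for every `s` and `e`, and `ℙ(R=1 ∣ E=1) > 0`.  Then the
probability of causation `PC = ℙ(R(S,0) = 0 ∣ E = 1, R(S,1) = 1)` satisfies
`PC ≤ 1 - Γ / ℙ(R=1 ∣ E=1)`, where
`Γ = ∑ s, ℙ(S=s ∣ E=1) · max 0 (ℙ(R=1 ∣ E=1, S=s) - ℙ(R=0 ∣ E=0, S=s))`. -/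
theorem sufficient_covariate_pc_upper_bound
    {Ω : Type*} [MeasurableSpace Ω] (μ : Measure Ω) [IsProbabilityMeasure μ]
    {𝒮 : Type*} [Fintype 𝒮] [MeasurableSpace 𝒮] [MeasurableSingletonClass 𝒮]
    (S : Ω → 𝒮) (Epot : 𝒮 → Ω → Bool) (Rpot : 𝒮 → Bool → Ω → Bool)
    (hSmeas : Measurable S) (hEpotmeas : ∀ s, Measurable (Epot s))
    (hRpotmeas : ∀ s e, Measurable (Rpot s e))
    (hindep : ∀ (a : Set 𝒮) (b : Set (𝒮 → Bool)) (c : Set (𝒮 → Bool → Bool)),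
      μ (S ⁻¹' a ∩ (fun ω s => Epot s ω) ⁻¹' b ∩ (fun ω s e => Rpot s e ω) ⁻¹' c) =
        μ (S ⁻¹' a) * μ ((fun ω s => Epot s ω) ⁻¹' b) *
          μ ((fun ω s e => Rpot s e ω) ⁻¹' c))
    (E R : Ω → Bool)
    (hE : E = fun ω => Epot (S ω) ω)
    (hRdef : R = fun ω => Rpot (S ω) (E ω) ω)
    (hpos : ∀ (s : 𝒮) (e : Bool), 0 < μ {ω | E ω = e ∧ S ω = s})
    (p₁ : ℝ) (hp₁ : p₁ = (μ[|{ω | E ω = true}] {ω | R ω = true}).toReal)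
    (hp₁pos : 0 < p₁)
    (Γ : ℝ)
    (hΓ : Γ = ∑ s : 𝒮, (μ[|{ω | E ω = true}] {ω | S ω = s}).toReal *
      max 0 ((μ[|{ω | E ω = true ∧ S ω = s}] {ω | R ω = true}).toReal -
        (μ[|{ω | E ω = false ∧ S ω = s}] {ω | R ω = false}).toReal))
    (PC : ℝ)
    (hPC : PC = (μ[|{ω | E ω = true ∧ Rpot (S ω) true ω = true}]
      {ω | Rpot (S ω) false ω = false}).toReal) :
    PC ≤ 1 - Γ / p₁ := by
  classical
  have hEω : ∀ ω, E ω = Epot (S ω) ω := fun ω => by rw [hE]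
  have hRω : ∀ ω, R ω = Rpot (S ω) (E ω) ω := fun ω => by rw [hRdef]
  -- A s e := {ω | E ω = e ∧ S ω = s}
  have hAeq : ∀ (s : 𝒮) (e : Bool), {ω | E ω = e ∧ S ω = s}
      = S ⁻¹' {s} ∩ (fun ω s => Epot s ω) ⁻¹' {f | f s = e} := by
    intro s e
    ext ω
    simp only [Set.mem_setOf_eq, Set.mem_inter_iff, Set.mem_preimage,
      Set.mem_singleton_iff, hEω ω]
    constructor
    · rintro ⟨h1, rfl⟩; exact ⟨rfl, h1⟩
    · rintro ⟨rfl, h2⟩; exact ⟨h2, rfl⟩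
  have hmA : ∀ (s : 𝒮) (e : Bool), MeasurableSet {ω | E ω = e ∧ S ω = s} := by
    intro s e
    rw [hAeq s e]
    exact (hSmeas (measurableSet_singleton s)).inter
      (hEpotmeas s (measurableSet_singleton e))
  -- key independence fact
  have hkey : ∀ (s : 𝒮) (e : Bool) (c : Set (𝒮 → Bool → Bool)),
      μ ({ω | E ω = e ∧ S ω = s} ∩ (fun ω s e => Rpot s e ω) ⁻¹' c)
        = μ {ω | E ω = e ∧ S ω = s} * μ ((fun ω s e => Rpot s e ω) ⁻¹' c) := by
    intro s e c
    have h1 := hindep {s} {f | f s = e} c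
    have h2 := hindep {s} {f | f s = e} Set.univ
    rw [Set.preimage_univ, Set.inter_univ, measure_univ, mul_one] at h2
    rw [hAeq s e, h1, h2]
  have f1 : ∀ s : 𝒮, μ ({ω | E ω = true ∧ S ω = s} ∩ {ω | Rpot s true ω = true})
      = μ {ω | E ω = true ∧ S ω = s} * μ {ω | Rpot s true ω = true} :=
    fun s => hkey s true {g | g s true = true}
  have f0 : ∀ s : 𝒮, μ ({ω | E ω = false ∧ S ω = s} ∩ {ω | Rpot s false ω = false})
      = μ {ω | E ω = false ∧ S ω = s} * μ {ω | Rpot s false ω = false} :=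
    fun s => hkey s false {g | g s false = false}
  have fb : ∀ s : 𝒮, μ ({ω | E ω = true ∧ S ω = s}
        ∩ {ω | Rpot s true ω = true ∧ Rpot s false ω = true})
      = μ {ω | E ω = true ∧ S ω = s}
        * μ {ω | Rpot s true ω = true ∧ Rpot s false ω = true} :=
    fun s => hkey s true {g | g s true = true ∧ g s false = true}
  -- sums over disjoint unions indexed by the value of S
  have hsumT : ∀ T : 𝒮 → Set Ω, (∀ s, MeasurableSet (T s)) →
      (∀ s, ∀ ω ∈ T s, S ω = s) → μ (⋃ s, T s) = ∑ s : 𝒮, μ (T s) := by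
    intro T hmeas hsub
    have hd : Pairwise (Function.onFun Disjoint T) := by
      intro i j hij
      refine Set.disjoint_left.mpr fun ω hi hj => hij ?_
      rw [← hsub i ω hi, hsub j ω hj]
    rw [measure_iUnion hd hmeas, tsum_fintype]
  -- measurability of R-block events
  have hmQ1 : ∀ s, MeasurableSet {ω | Rpot s true ω = true} :=
    fun s => hRpotmeas s true (measurableSet_singleton true)
  have hmQ0 : ∀ s, MeasurableSet {ω | Rpot s false ω = false} :=
    fun s => hRpotmeas s false (measurableSet_singleton false)
  have hmB : ∀ s, MeasurableSet {ω | Rpot s true ω = true ∧ Rpot s false ω = true} :=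
    fun s => (hRpotmeas s true (measurableSet_singleton true)).inter
      (hRpotmeas s false (measurableSet_singleton true))
  -- E1 measurable
  have hE1u : {ω | E ω = true} = ⋃ s, {ω | E ω = true ∧ S ω = s} := by
    ext ω
    simp only [Set.mem_setOf_eq, Set.mem_iUnion]
    exact ⟨fun h => ⟨S ω, h, rfl⟩, fun ⟨s, h, _⟩ => h⟩
  have hmE1 : MeasurableSet {ω | E ω = true} := by
    rw [hE1u]; exact MeasurableSet.iUnion fun s => hmA s true
  -- C and its measure
  have hCu : {ω | E ω = true ∧ Rpot (S ω) true ω = true}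
      = ⋃ s, ({ω | E ω = true ∧ S ω = s} ∩ {ω | Rpot s true ω = true}) := by
    ext ω
    simp only [Set.mem_setOf_eq, Set.mem_iUnion, Set.mem_inter_iff]
    constructor
    · rintro ⟨h1, h2⟩; exact ⟨S ω, ⟨h1, rfl⟩, h2⟩
    · rintro ⟨s, ⟨h1, rfl⟩, h2⟩; exact ⟨h1, h2⟩
  have hmC : MeasurableSet {ω | E ω = true ∧ Rpot (S ω) true ω = true} := by
    rw [hCu]; exact MeasurableSet.iUnion fun s => (hmA s true).inter (hmQ1 s)
  have hμC : μ {ω | E ω = true ∧ Rpot (S ω) true ω = true}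
      = ∑ s : 𝒮, μ {ω | E ω = true ∧ S ω = s} * μ {ω | Rpot s true ω = true} := by
    rw [hCu, hsumT _ (fun s => (hmA s true).inter (hmQ1 s)) (fun s ω hω => hω.1.2)]
    exact Finset.sum_congr rfl fun s _ => f1 s
  -- {E=1} ∩ {R=1} has the same measure as C
  have hER : μ ({ω | E ω = true} ∩ {ω | R ω = true})
      = μ {ω | E ω = true ∧ Rpot (S ω) true ω = true} := by
    congr 1
    ext ω
    simp only [Set.mem_inter_iff, Set.mem_setOf_eq]
    constructor
    · rintro ⟨h1, h2⟩; rw [hRω ω, h1] at h2; exact ⟨h1, h2⟩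
    · rintro ⟨h1, h2⟩; exact ⟨h1, by rw [hRω ω, h1]; exact h2⟩
  -- μ E1 ≠ 0
  have hμE1ne : μ {ω | E ω = true} ≠ 0 := by
    obtain ⟨ω0, -⟩ : (Set.univ : Set Ω).Nonempty := by
      by_contra h
      rw [Set.not_nonempty_iff_eq_empty] at h
      have h1 : μ Set.univ = 1 := measure_univ
      rw [h, measure_empty] at h1
      exact one_ne_zero h1.symm
    have hp := hpos (S ω0) true
    intro h0
    have hle : μ {ω | E ω = true ∧ S ω = S ω0} ≤ μ {ω | E ω = true} :=
      measure_mono fun ω hω => hω.1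
    rw [h0] at hle
    exact hp.ne' (le_antisymm hle zero_le)
  -- conditional probabilities
  have hcond1 : ∀ s, (μ[|{ω | E ω = true ∧ S ω = s}] {ω | R ω = true}).toReal
      = (μ {ω | Rpot s true ω = true}).toReal := by
    intro s
    rw [cond_apply (hmA s true) μ]
    have hset : {ω | E ω = true ∧ S ω = s} ∩ {ω | R ω = true}
        = {ω | E ω = true ∧ S ω = s} ∩ {ω | Rpot s true ω = true} := by
      ext ω
      simp only [Set.mem_inter_iff, Set.mem_setOf_eq]
      constructor
      · rintro ⟨⟨h1, rfl⟩, h2⟩; rw [hRω ω, h1] at h2; exact ⟨⟨h1, rfl⟩, h2⟩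
      · rintro ⟨⟨h1, rfl⟩, h2⟩; exact ⟨⟨h1, rfl⟩, by rw [hRω ω, h1]; exact h2⟩
    rw [hset, f1 s, ← mul_assoc,
      ENNReal.inv_mul_cancel (hpos s true).ne' (measure_ne_top μ _), one_mul]
  have hcond0 : ∀ s, (μ[|{ω | E ω = false ∧ S ω = s}] {ω | R ω = false}).toReal
      = (μ {ω | Rpot s false ω = false}).toReal := by
    intro s
    rw [cond_apply (hmA s false) μ]
    have hset : {ω | E ω = false ∧ S ω = s} ∩ {ω | R ω = false}
        = {ω | E ω = false ∧ S ω = s} ∩ {ω | Rpot s false ω = false} := by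
      ext ω
      simp only [Set.mem_inter_iff, Set.mem_setOf_eq]
      constructor
      · rintro ⟨⟨h1, rfl⟩, h2⟩; rw [hRω ω, h1] at h2; exact ⟨⟨h1, rfl⟩, h2⟩
      · rintro ⟨⟨h1, rfl⟩, h2⟩; exact ⟨⟨h1, rfl⟩, by rw [hRω ω, h1]; exact h2⟩
    rw [hset, f0 s, ← mul_assoc,
      ENNReal.inv_mul_cancel (hpos s false).ne' (measure_ne_top μ _), one_mul]
  have hcondS : ∀ s, (μ[|{ω | E ω = true}] {ω | S ω = s}).toReal
      = (μ {ω | E ω = true ∧ S ω = s}).toReal / (μ {ω | E ω = true}).toReal := by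
    intro s
    rw [cond_apply hmE1 μ]
    have hset : {ω | E ω = true} ∩ {ω | S ω = s} = {ω | E ω = true ∧ S ω = s} := rfl
    rw [hset, ENNReal.toReal_mul, ENNReal.toReal_inv, inv_mul_eq_div]
  have hp₁' : p₁ = (μ {ω | E ω = true ∧ Rpot (S ω) true ω = true}).toReal
      / (μ {ω | E ω = true}).toReal := by
    rw [hp₁, cond_apply hmE1 μ, hER, ENNReal.toReal_mul, ENNReal.toReal_inv,
      inv_mul_eq_div]
  have hPC' : PC = (μ ({ω | E ω = true ∧ Rpot (S ω) true ω = true}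
        ∩ {ω | Rpot (S ω) false ω = false})).toReal
      / (μ {ω | E ω = true ∧ Rpot (S ω) true ω = true}).toReal := by
    rw [hPC, cond_apply hmC μ, ENNReal.toReal_mul, ENNReal.toReal_inv, inv_mul_eq_div]
  -- the "both potential responses are 1" part
  have hS6 : {ω | E ω = true ∧ Rpot (S ω) true ω = true}
        ∩ {ω | Rpot (S ω) false ω = true}
      = ⋃ s, ({ω | E ω = true ∧ S ω = s}
        ∩ {ω | Rpot s true ω = true ∧ Rpot s false ω = true}) := by
    ext ω
    simp only [Set.mem_inter_iff, Set.mem_setOf_eq, Set.mem_iUnion]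
    constructor
    · rintro ⟨⟨h1, h2⟩, h3⟩; exact ⟨S ω, ⟨h1, rfl⟩, h2, h3⟩
    · rintro ⟨s, ⟨h1, rfl⟩, h2, h3⟩; exact ⟨⟨h1, h2⟩, h3⟩
  have hmCZt : MeasurableSet ({ω | E ω = true ∧ Rpot (S ω) true ω = true}
      ∩ {ω | Rpot (S ω) false ω = true}) := by
    rw [hS6]; exact MeasurableSet.iUnion fun s => (hmA s true).inter (hmB s)
  have hμCZt : μ ({ω | E ω = true ∧ Rpot (S ω) true ω = true}
        ∩ {ω | Rpot (S ω) false ω = true})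
      = ∑ s : 𝒮, μ {ω | E ω = true ∧ S ω = s}
        * μ {ω | Rpot s true ω = true ∧ Rpot s false ω = true} := by
    rw [hS6, hsumT _ (fun s => (hmA s true).inter (hmB s)) (fun s ω hω => hω.1.2)]
    exact Finset.sum_congr rfl fun s _ => fb s
  -- partition of C
  have hsplit : μ ({ω | E ω = true ∧ Rpot (S ω) true ω = true}
        ∩ {ω | Rpot (S ω) false ω = false})
      + μ ({ω | E ω = true ∧ Rpot (S ω) true ω = true}
        ∩ {ω | Rpot (S ω) false ω = true})
      = μ {ω | E ω = true ∧ Rpot (S ω) true ω = true} := by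
    have hdisj : Disjoint ({ω | E ω = true ∧ Rpot (S ω) true ω = true}
          ∩ {ω | Rpot (S ω) false ω = false})
        ({ω | E ω = true ∧ Rpot (S ω) true ω = true}
          ∩ {ω | Rpot (S ω) false ω = true}) := by
      refine Set.disjoint_left.mpr fun ω h1 h2 => ?_
      simp only [Set.mem_inter_iff, Set.mem_setOf_eq] at h1 h2
      rw [h1.2] at h2
      exact Bool.noConfusion h2.2
    rw [← measure_union hdisj hmCZt]
    congr 1
    ext ω
    simp only [Set.mem_union, Set.mem_inter_iff, Set.mem_setOf_eq]
    constructor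
    · rintro (⟨h, -⟩ | ⟨h, -⟩) <;> exact h
    · intro h
      cases hb : Rpot (S ω) false ω with
      | false => exact Or.inl ⟨h, rfl⟩
      | true => exact Or.inr ⟨h, rfl⟩
  -- real-number abbreviations and positivity
  have hE1Rpos : 0 < (μ {ω | E ω = true}).toReal :=
    ENNReal.toReal_pos hμE1ne (measure_ne_top μ _)
  have hCRpos : 0 < (μ {ω | E ω = true ∧ Rpot (S ω) true ω = true}).toReal := by
    rcases lt_or_eq_of_le (ENNReal.toReal_nonneg
        (a := μ {ω | E ω = true ∧ Rpot (S ω) true ω = true})) with h | h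
    · exact h
    · exfalso
      rw [hp₁', ← h, zero_div] at hp₁pos
      exact lt_irrefl 0 hp₁pos
  -- pointwise Fréchet bound
  have hpt : ∀ s : 𝒮, max 0 ((μ {ω | Rpot s true ω = true}).toReal
        - (μ {ω | Rpot s false ω = false}).toReal)
      ≤ (μ {ω | Rpot s true ω = true ∧ Rpot s false ω = true}).toReal := by
    intro s
    apply max_le ENNReal.toReal_nonneg
    have hsub : {ω | Rpot s true ω = true}
        ⊆ {ω | Rpot s true ω = true ∧ Rpot s false ω = true}
          ∪ {ω | Rpot s false ω = false} := by
      intro ω h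
      cases hb : Rpot s false ω
      · exact Or.inr hb
      · exact Or.inl ⟨h, hb⟩
    have hle : μ {ω | Rpot s true ω = true}
        ≤ μ {ω | Rpot s true ω = true ∧ Rpot s false ω = true}
          + μ {ω | Rpot s false ω = false} :=
      (measure_mono hsub).trans (measure_union_le _ _)
    have h2 := ENNReal.toReal_mono
      (ENNReal.add_ne_top.mpr ⟨measure_ne_top μ _, measure_ne_top μ _⟩) hle
    rw [ENNReal.toReal_add (measure_ne_top μ _) (measure_ne_top μ _)] at h2
    linarith
  -- rewrite Γ
  have hΓ' : Γ = (∑ s : 𝒮, (μ {ω | E ω = true ∧ S ω = s}).toReal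
      * max 0 ((μ {ω | Rpot s true ω = true}).toReal
        - (μ {ω | Rpot s false ω = false}).toReal))
      / (μ {ω | E ω = true}).toReal := by
    rw [hΓ, Finset.sum_div]
    refine Finset.sum_congr rfl fun s _ => ?_
    rw [hcondS s, hcond1 s, hcond0 s, div_mul_eq_mul_div]
  -- main fraction computation
  have hE1ne' : (μ {ω | E ω = true}).toReal ≠ 0 := ne_of_gt hE1Rpos
  have hCne' : (μ {ω | E ω = true ∧ Rpot (S ω) true ω = true}).toReal ≠ 0 :=
    ne_of_gt hCRpos
  have hfrac : Γ / p₁ = (∑ s : 𝒮, (μ {ω | E ω = true ∧ S ω = s}).toReal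
      * max 0 ((μ {ω | Rpot s true ω = true}).toReal
        - (μ {ω | Rpot s false ω = false}).toReal))
      / (μ {ω | E ω = true ∧ Rpot (S ω) true ω = true}).toReal := by
    rw [hΓ', hp₁']
    field_simp
  -- sum comparison
  have hμCZtR : (μ ({ω | E ω = true ∧ Rpot (S ω) true ω = true}
        ∩ {ω | Rpot (S ω) false ω = true})).toReal
      = ∑ s : 𝒮, (μ {ω | E ω = true ∧ S ω = s}).toReal
        * (μ {ω | Rpot s true ω = true ∧ Rpot s false ω = true}).toReal := by
    rw [hμCZt, ENNReal.toReal_sum (fun s _ => ENNReal.mul_ne_top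
      (measure_ne_top μ _) (measure_ne_top μ _))]
    exact Finset.sum_congr rfl fun s _ => ENNReal.toReal_mul
  have hsum_le : (∑ s : 𝒮, (μ {ω | E ω = true ∧ S ω = s}).toReal
      * max 0 ((μ {ω | Rpot s true ω = true}).toReal
        - (μ {ω | Rpot s false ω = false}).toReal))
      ≤ (μ ({ω | E ω = true ∧ Rpot (S ω) true ω = true}
        ∩ {ω | Rpot (S ω) false ω = true})).toReal := by
    rw [hμCZtR]
    exact Finset.sum_le_sum fun s _ =>
      mul_le_mul_of_nonneg_left (hpt s) ENNReal.toReal_nonneg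
  have hΓp : Γ / p₁ ≤ (μ ({ω | E ω = true ∧ Rpot (S ω) true ω = true}
        ∩ {ω | Rpot (S ω) false ω = true})).toReal
      / (μ {ω | E ω = true ∧ Rpot (S ω) true ω = true}).toReal := by
    rw [hfrac]
    gcongr
  -- split in reals
  have hsplitR : (μ ({ω | E ω = true ∧ Rpot (S ω) true ω = true}
        ∩ {ω | Rpot (S ω) false ω = false})).toReal
      + (μ ({ω | E ω = true ∧ Rpot (S ω) true ω = true}
        ∩ {ω | Rpot (S ω) false ω = true})).toReal
      = (μ {ω | E ω = true ∧ Rpot (S ω) true ω = true}).toReal := by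
    rw [← ENNReal.toReal_add (measure_ne_top μ _) (measure_ne_top μ _), hsplit]
  have h1 : (μ ({ω | E ω = true ∧ Rpot (S ω) true ω = true}
        ∩ {ω | Rpot (S ω) false ω = false})).toReal
      / (μ {ω | E ω = true ∧ Rpot (S ω) true ω = true}).toReal
      = 1 - (μ ({ω | E ω = true ∧ Rpot (S ω) true ω = true}
        ∩ {ω | Rpot (S ω) false ω = true})).toReal
      / (μ {ω | E ω = true ∧ Rpot (S ω) true ω = true}).toReal := by
    field_simp
    linarith [hsplitR]
  rw [hPC', h1]
  linarith [hΓp]
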